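/- arXiv:1808.05547 — 2 statements merged into one kernel-verified Lean document; each statement's English description precedes it below -/
import Mathlib

section
/- Let ℓ ≤ m ≤ n be positive integers and let p(x) = (1+...+x^ℓ)(1+...+x^m) + x·(1+...+x^{ℓ+m})(1+...+x^{n-1}). Then the coefficients of p satisfy: the constant coefficient is 1; the coefficients increase by 2 in each step up to degree ℓ; thereafter they increase by 1 until degree m; they stay constant from degree m to degree n; and finally decrease by 1 in each step until the coefficient of x^{ℓ+m+n}, which is 1. -/
set_option linter.unusedVariables false
set_option linter.unusedSectionVars false

open Polynomial

/-- The geometric sum polynomial `1 + x + ... + x^m` in `ℤ[x]`, interpreted as `0` if `m < 0`. -/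
noncomputable def geom (m : ℤ) : Polynomial ℤ :=
  ∑ j ∈ Finset.range (m + 1).toNat, X ^ j

lemma geom_nat (a : ℕ) : geom (a : ℤ) = ∑ j ∈ Finset.range (a + 1), X ^ j := by
  have h : ((a : ℤ) + 1).toNat = a + 1 := by omega
  rw [geom, h]

lemma geom_mul_X_sub_one (a : ℕ) : geom (a : ℤ) * (X - 1) = X ^ (a + 1) - 1 := by
  rw [geom_nat, geom_sum_mul]

lemma geom_monic (a : ℕ) : (geom (a : ℤ)).Monic := by
  rw [geom_nat]; exact monic_geom_sum_X (Nat.succ_ne_zero a)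

lemma geom_natDegree (a : ℕ) : (geom (a : ℤ)).natDegree = a := by
  refine le_antisymm ?_ ?_
  · rw [geom_nat]
    refine natDegree_sum_le_of_forall_le _ _ fun j hj => ?_
    simp only [natDegree_X_pow]
    exact Nat.lt_succ_iff.mp (Finset.mem_range.mp hj)
  · refine le_natDegree_of_ne_zero ?_
    rw [geom_nat]
    simp [coeff_X_pow, Finset.sum_ite_eq, Nat.lt_succ_iff]

set_option maxHeartbeats 1600000 in
theorem stmt3 (ℓ m n : ℕ) (hℓ : 1 ≤ ℓ) (hlm : ℓ ≤ m) (hmn : m ≤ n)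
    (p : Polynomial ℤ)
    (hp : p = geom (ℓ : ℤ) * geom (m : ℤ)
        + X * (geom ((ℓ : ℤ) + (m : ℤ)) * geom ((n : ℤ) - 1))) :
    p.coeff 0 = 1 ∧
    (∀ i : ℕ, i < ℓ → p.coeff (i + 1) = p.coeff i + 2) ∧
    (∀ i : ℕ, ℓ ≤ i → i < m → p.coeff (i + 1) = p.coeff i + 1) ∧
    (∀ i : ℕ, m ≤ i → i < n → p.coeff (i + 1) = p.coeff i) ∧
    (∀ i : ℕ, n ≤ i → i < ℓ + m + n → p.coeff (i + 1) = p.coeff i - 1) ∧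
    p.coeff (ℓ + m + n) = 1 := by
  set q := p * (X - 1) with hqdef
  have hcast : ((ℓ : ℤ) + (m : ℤ)) = (((ℓ + m : ℕ)) : ℤ) := by push_cast; ring
  have hcast2 : ((n : ℤ) - 1) = (((n - 1 : ℕ)) : ℤ) := by omega
  have hn1 : geom ((n : ℤ) - 1) * (X - 1) = X ^ n - 1 := by
    rw [geom, show ((n : ℤ) - 1 + 1).toNat = n by omega, geom_sum_mul]
  have hr : q * (X - 1)
      = X ^ (ℓ + m + n + 2) - X ^ (n + 1) - X ^ (m + 1) - X ^ (ℓ + 1) + X + 1 := by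
    calc q * (X - 1)
        = (geom (ℓ : ℤ) * (X - 1)) * (geom (m : ℤ) * (X - 1))
            + X * ((geom (((ℓ + m : ℕ)) : ℤ) * (X - 1)) * (geom ((n : ℤ) - 1) * (X - 1))) := by
          rw [hqdef, hp, hcast]; ring
      _ = (X ^ (ℓ + 1) - 1) * (X ^ (m + 1) - 1) + X * ((X ^ (ℓ + m + 1) - 1) * (X ^ n - 1)) := by
          rw [geom_mul_X_sub_one, geom_mul_X_sub_one, geom_mul_X_sub_one, hn1]
      _ = X ^ (ℓ + m + n + 2) - X ^ (n + 1) - X ^ (m + 1) - X ^ (ℓ + 1) + X + 1 := by ring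
  -- formula for coefficients of q
  have hG : ∀ k : ℕ, q.coeff k =
      min (max ((k : ℤ) - ℓ) 0) 1 + min (max ((k : ℤ) - m) 0) 1 + min (max ((k : ℤ) - n) 0) 1
        - min (max ((k : ℤ) - (ℓ + m + n + 1)) 0) 1 - min (k : ℤ) 1 - 1 := by
    intro k
    induction k with
    | zero =>
        have h := congrArg (fun f => Polynomial.coeff f 0) hr
        simp [mul_sub, coeff_X_pow, coeff_one, coeff_X] at h
        simp only [Nat.cast_zero]
        omega
    | succ k ih =>
        have h := congrArg (fun f => Polynomial.coeff f (k + 1)) hr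
        simp [mul_sub, coeff_X_pow, coeff_one, coeff_X] at h
        rw [ih] at h
        push_cast at h ⊢
        split_ifs at h <;> omega
  have hp0 : p.coeff 0 = 1 := by
    have h := hG 0
    rw [hqdef] at h
    simp [mul_sub, coeff_X_pow, coeff_one, coeff_X] at h
    omega
  have hpq : ∀ k : ℕ, q.coeff (k + 1) = p.coeff k - p.coeff (k + 1) := by
    intro k
    rw [hqdef, mul_sub, mul_one, coeff_sub, coeff_mul_X]
  have hstep : ∀ i : ℕ, p.coeff (i + 1) = p.coeff i -
      (min (max ((i : ℤ) + 1 - ℓ) 0) 1 + min (max ((i : ℤ) + 1 - m) 0) 1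
        + min (max ((i : ℤ) + 1 - n) 0) 1
        - min (max ((i : ℤ) + 1 - (ℓ + m + n + 1)) 0) 1 - min ((i : ℤ) + 1) 1 - 1) := by
    intro i
    have h := hpq i
    rw [hG (i + 1)] at h
    push_cast at h
    omega
  -- the top coefficient
  have htop : p.coeff (ℓ + m + n) = 1 := by
    rw [hp]
    rw [coeff_add]
    have h1 : (geom (ℓ : ℤ) * geom (m : ℤ)).coeff (ℓ + m + n) = 0 := by
      refine coeff_eq_zero_of_natDegree_lt (lt_of_le_of_lt (natDegree_mul_le) ?_)
      rw [geom_natDegree, geom_natDegree]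
      omega
    have h2 : (X * (geom ((ℓ : ℤ) + (m : ℤ)) * geom ((n : ℤ) - 1))).coeff (ℓ + m + n) = 1 := by
      rw [hcast, hcast2, show ℓ + m + n = (ℓ + m + (n - 1)) + 1 by omega, coeff_X_mul]
      have := coeff_mul_degree_add_degree (geom (((ℓ + m : ℕ)) : ℤ)) (geom (((n - 1 : ℕ)) : ℤ))
      rw [geom_natDegree, geom_natDegree, (geom_monic (ℓ + m)).leadingCoeff,
        (geom_monic (n - 1)).leadingCoeff] at this
      rw [this, mul_one]
    rw [h1, h2, zero_add]
  clear hr hG hpq hp hn1 hcast hcast2 hqdef q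
  refine ⟨hp0, ?_, ?_, ?_, ?_, htop⟩
  · intro i h1
    have h := hstep i
    omega
  · intro i h1 h2
    have h := hstep i
    omega
  · intro i h1 h2
    have h := hstep i
    omega
  · intro i h1 h2
    have h := hstep i
    omega
end

section
/- For k ≥ 1, the coefficient of x^{4k-n} in the polynomial (1+...+x^{2k-2})(1+...+x^{k-2}) + x^{k-1}(1+...+x^{k-1})^2 equals: 2(n-k)−5 when 2n−3 ≤ 4k ≤ 4n−12; 4k−n+1 when n ≤ 4k ≤ 2n−4; and 0 when 4k < n or 4k > 4n−12 (with n ≥ 4 an integer). -/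
set_option maxHeartbeats 1000000

open Polynomial

lemma toLaurent_at_coe (p : ℤ[X]) (m : ℕ) : (Polynomial.toLaurent p).coeff (m : ℤ) = p.coeff m := by
  rw [LaurentPolynomial.coeff_toLaurent]
  exact Finsupp.mapDomain_apply Nat.castEmbedding.injective _ m

lemma toLaurent_at_neg (p : ℤ[X]) (g : ℤ) (hg : g < 0) : (Polynomial.toLaurent p).coeff g = 0 := by
  rw [LaurentPolynomial.coeff_toLaurent]
  apply Finsupp.mapDomain_notin_range
  rintro ⟨m, rfl⟩
  simp only [Nat.castEmbedding_apply] at hg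
  omega

lemma coeff_geom (m : ℤ) (i : ℕ) : (geom m).coeff i = if (i : ℤ) ≤ m then 1 else 0 := by
  simp only [geom, Polynomial.finset_sum_coeff, Polynomial.coeff_X_pow]
  rw [Finset.sum_ite_eq (Finset.range (m+1).toNat) i (fun _ => (1:ℤ))]
  simp only [Finset.mem_range]
  congr 1
  simp only [eq_iff_iff, Int.lt_toNat]
  omega

lemma coeff_geom_mul (a b : ℤ) (ha : 0 ≤ a) (d : ℕ) :
    (geom a * geom b).coeff d
      = ((Finset.Icc (((d : ℤ) - b).toNat) ((min (d : ℤ) a).toNat)).card : ℤ) := by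
  rw [Polynomial.coeff_mul, Finset.Nat.sum_antidiagonal_eq_sum_range_succ_mk]
  simp only [coeff_geom, ite_mul, one_mul, zero_mul, ← ite_and]
  rw [Finset.sum_boole]
  congr 1
  apply Finset.card_nbij' id id
  · intro i hi
    simp only [Finset.mem_coe, Finset.mem_filter, Finset.mem_range] at hi
    simp only [id, Finset.mem_coe, Finset.mem_Icc]
    omega
  · intro i hi
    simp only [Finset.mem_coe, Finset.mem_Icc] at hi
    simp only [id, Finset.mem_coe, Finset.mem_filter, Finset.mem_range]
    omega
  · intro _ _; rfl
  · intro _ _; rfl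

lemma coeff_p (k : ℕ) (hk : 1 ≤ k) (d : ℕ) :
    (geom (2*(k:ℤ) - 2) * geom ((k:ℤ) - 2) + X ^ (k - 1) * (geom ((k:ℤ) - 1)) ^ 2).coeff d
      = max 0 (min (d:ℤ) (2*(k:ℤ)-2) - max 0 ((d:ℤ) - ((k:ℤ)-2)) + 1)
        + max 0 (min ((d:ℤ)-((k:ℤ)-1)) ((k:ℤ)-1) - max 0 ((d:ℤ)-((k:ℤ)-1) - ((k:ℤ)-1)) + 1) := by
  have hk' : (1:ℤ) ≤ (k:ℤ) := by exact_mod_cast hk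
  rw [Polynomial.coeff_add, mul_comm (X ^ (k-1) : ℤ[X]) _, Polynomial.coeff_mul_X_pow', sq,
    coeff_geom_mul _ _ (by omega)]
  by_cases hd : k - 1 ≤ d
  · rw [if_pos hd, coeff_geom_mul _ _ (by omega), Nat.card_Icc, Nat.card_Icc]
    set_option maxHeartbeats 2000000 in omega
  · rw [if_neg hd, Nat.card_Icc]
    set_option maxHeartbeats 2000000 in omega

/-- The coefficient of `x^{4k-n}` (with `4k-n ∈ ℤ`, coefficients of negative powers being `0`)
in `(1+...+x^{2k-2})(1+...+x^{k-2}) + x^{k-1}(1+...+x^{k-1})²`. -/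
theorem stmt12 (n k : ℕ) (hn : 4 ≤ n) (hk : 1 ≤ k)
    (p : Polynomial ℤ)
    (hp : p = geom (2 * (k : ℤ) - 2) * geom ((k : ℤ) - 2)
        + X ^ (k - 1) * (geom ((k : ℤ) - 1)) ^ 2)
    (c : ℤ) (hc : c = (Polynomial.toLaurent p).coeff (4 * (k : ℤ) - (n : ℤ))) :
    (2 * (n : ℤ) - 3 ≤ 4 * (k : ℤ) → 4 * (k : ℤ) ≤ 4 * (n : ℤ) - 12 →
      c = 2 * ((n : ℤ) - (k : ℤ)) - 5) ∧
    ((n : ℤ) ≤ 4 * (k : ℤ) → 4 * (k : ℤ) ≤ 2 * (n : ℤ) - 4 →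
      c = 4 * (k : ℤ) - (n : ℤ) + 1) ∧
    (4 * (k : ℤ) < (n : ℤ) → c = 0) ∧
    (4 * (n : ℤ) - 12 < 4 * (k : ℤ) → c = 0) := by
  subst hp
  have key : ∀ h : (0:ℤ) ≤ 4 * (k:ℤ) - (n:ℤ),
      c = max 0 (min ((4*(k:ℤ)-(n:ℤ))) (2*(k:ℤ)-2) - max 0 ((4*(k:ℤ)-(n:ℤ)) - ((k:ℤ)-2)) + 1)
        + max 0 (min ((4*(k:ℤ)-(n:ℤ))-((k:ℤ)-1)) ((k:ℤ)-1)
            - max 0 ((4*(k:ℤ)-(n:ℤ))-((k:ℤ)-1) - ((k:ℤ)-1)) + 1) := by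
    intro h
    have hd : (4 * (k:ℤ) - (n:ℤ)) = (((4 * (k:ℤ) - (n:ℤ)).toNat : ℕ) : ℤ) := by omega
    rw [hd] at hc
    rw [hc, toLaurent_at_coe, coeff_p k hk, ← hd]
  refine ⟨?_, ?_, ?_, ?_⟩
  · intro h1 h2
    have := key (by omega)
    omega
  · intro h1 h2
    have := key (by omega)
    omega
  · intro h1
    rw [hc, toLaurent_at_neg _ _ (by omega)]
  · intro h1
    have := key (by omega)
    omega
end
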